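/- Let H be a Hermitian d×d complex matrix and let 𝒮 be a real-linear subspace of the real vector space of Hermitian d×d matrices. Then sup{ |Tr(H C̃)| : C̃ Hermitian, ‖C̃‖₁ ≤ 2, and Tr(C̃ S) = 0 for all S ∈ 𝒮 } = 2 · inf{ ‖H − S‖ : S ∈ 𝒮 }, where ‖·‖₁ is the trace norm (sum of absolute values of the eigenvalues for a Hermitian matrix) and ‖·‖ is the operator norm; moreover both the supremum and the infimum are attained. -/

import Mathlib

open Matrix

/-- The ℓ²→ℓ² operator norm (largest singular value) of a complex matrix. -/
noncomputable def opNorm {m n : Type*} [Fintype m] [Fintype n] [DecidableEq n]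
    (A : Matrix m n ℂ) : ℝ :=
  ‖LinearMap.toContinuousLinearMap (Matrix.toEuclideanLin A)‖

/-- The trace norm of a Hermitian matrix: the sum of the absolute values of its
eigenvalues. -/
noncomputable def traceNormOfHermitian {d : ℕ} {A : Matrix (Fin d) (Fin d) ℂ}
    (hA : A.IsHermitian) : ℝ :=
  ∑ i, |hA.eigenvalues i|

open scoped Matrix.Norms.L2Operator

namespace SDPDualityAux

variable {d : ℕ}

lemma opNorm_eq_norm (A : Matrix (Fin d) (Fin d) ℂ) : opNorm A = ‖A‖ := rfl

lemma euclid_apply_le (y : EuclideanSpace ℂ (Fin d)) (i : Fin d) :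
    ‖y i‖ ≤ ‖y‖ := by
  have h := norm_inner_le_norm (𝕜 := ℂ) (EuclideanSpace.single i (1:ℂ)) y
  simpa [EuclideanSpace.inner_single_left, EuclideanSpace.norm_single] using h

lemma norm_one_le : ‖(1 : Matrix (Fin d) (Fin d) ℂ)‖ ≤ 1 := by
  rw [Matrix.cstar_norm_def, _root_.map_one]
  exact ContinuousLinearMap.norm_id_le

lemma unitary_norm_le {U : Matrix (Fin d) (Fin d) ℂ}
    (hU : U ∈ Matrix.unitaryGroup (Fin d) ℂ) : ‖U‖ ≤ 1 := by
  have h1 : star U * U = 1 := (Matrix.mem_unitaryGroup_iff').mp hU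
  have h2 : ‖star U * U‖ = ‖U‖ * ‖U‖ := CStarRing.norm_star_mul_self
  rw [h1] at h2
  nlinarith [norm_nonneg U, norm_one_le (d := d)]

lemma diag_norm_le (v : Fin d → ℂ) (hv : ∀ i, ‖v i‖ ≤ 1) :
    ‖Matrix.diagonal v‖ ≤ 1 := by
  rw [Matrix.l2_opNorm_def]
  refine ContinuousLinearMap.opNorm_le_bound _ zero_le_one fun x => ?_
  rw [one_mul]
  have hx : ∀ (z : EuclideanSpace ℂ (Fin d)), ‖z‖ = Real.sqrt (∑ i, ‖z i‖^2) :=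
    fun z => EuclideanSpace.norm_eq z
  have happ : ∀ i : Fin d, ((LinearEquiv.trans (Matrix.toEuclideanLin)
      (LinearMap.toContinuousLinearMap) (Matrix.diagonal v)) x) i = v i * x i := by
    intro i
    simp [Matrix.toEuclideanLin_apply, Matrix.mulVec_diagonal]
  rw [hx, hx x]
  apply Real.sqrt_le_sqrt
  apply Finset.sum_le_sum
  intro i _
  rw [happ i]
  have : ‖v i * x i‖ ≤ ‖x i‖ := by
    rw [norm_mul]
    calc ‖v i‖ * ‖x i‖ ≤ 1 * ‖x i‖ :=
      mul_le_mul_of_nonneg_right (by simpa using hv i) (norm_nonneg _)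
    _ = ‖x i‖ := one_mul _
  nlinarith [norm_nonneg (v i * x i), norm_nonneg (x i), this]

lemma entry_le (A : Matrix (Fin d) (Fin d) ℂ) (i j : Fin d) :
    ‖A i j‖ ≤ ‖A‖ := by
  have key : ∀ x : EuclideanSpace ℂ (Fin d),
      ‖(LinearEquiv.trans (Matrix.toEuclideanLin)
        (LinearMap.toContinuousLinearMap) A) x‖ ≤ ‖A‖ * ‖x‖ := by
    intro x
    have h := ((LinearEquiv.trans (Matrix.toEuclideanLin)
        (LinearMap.toContinuousLinearMap) A)).le_opNorm x
    rwa [← Matrix.l2_opNorm_def] at h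
  set x : EuclideanSpace ℂ (Fin d) := EuclideanSpace.single j (1:ℂ) with hxdef
  have h1 := key x
  have h2 : ((LinearEquiv.trans (Matrix.toEuclideanLin)
      (LinearMap.toContinuousLinearMap) A) x) i = A i j := by
    simp [hxdef, Matrix.toEuclideanLin_apply, Matrix.mulVec_single]
  have h3 := euclid_apply_le ((LinearEquiv.trans (Matrix.toEuclideanLin)
      (LinearMap.toContinuousLinearMap) A) x) i
  rw [h2] at h3
  have h4 : ‖x‖ = 1 := by simp [hxdef]
  rw [h4, mul_one] at h1
  exact h3.trans h1

lemma conj_norm_le {U : Matrix (Fin d) (Fin d) ℂ} (hU : U ∈ Matrix.unitaryGroup (Fin d) ℂ)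
    (X : Matrix (Fin d) (Fin d) ℂ) : ‖star U * X * U‖ ≤ ‖X‖ := by
  have h1 : ‖star U‖ ≤ 1 := unitary_norm_le (Unitary.star_mem hU)
  have h2 : ‖U‖ ≤ 1 := unitary_norm_le hU
  calc ‖star U * X * U‖ ≤ ‖star U * X‖ * ‖U‖ := Matrix.l2_opNorm_mul _ _
    _ ≤ (‖star U‖ * ‖X‖) * ‖U‖ :=
      mul_le_mul_of_nonneg_right (Matrix.l2_opNorm_mul _ _) (norm_nonneg _)
    _ ≤ (1 * ‖X‖) * 1 := by
      apply mul_le_mul (mul_le_mul_of_nonneg_right h1 (norm_nonneg _)) h2 (norm_nonneg _)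
      positivity
    _ = ‖X‖ := by ring

lemma trace_conj_diag (U : Matrix (Fin d) (Fin d) ℂ) (w : Fin d → ℂ)
    (A : Matrix (Fin d) (Fin d) ℂ) :
    (A * (U * Matrix.diagonal w * star U)).trace
      = ∑ i, (star U * A * U) i i * w i := by
  have h : (A * (U * Matrix.diagonal w * star U)).trace
      = ((star U * A * U) * Matrix.diagonal w).trace := by
    rw [show A * (U * Matrix.diagonal w * star U)
        = (A * U * Matrix.diagonal w) * star U by noncomm_ring,
      Matrix.trace_mul_comm]
    noncomm_ring
  rw [h]
  simp [Matrix.trace, Matrix.diag, Matrix.mul_diagonal]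

lemma holder (A : Matrix (Fin d) (Fin d) ℂ) {C : Matrix (Fin d) (Fin d) ℂ}
    (hC : C.IsHermitian) :
    ‖(A * C).trace‖ ≤ ‖A‖ * traceNormOfHermitian hC := by
  set U : Matrix (Fin d) (Fin d) ℂ := (hC.eigenvectorUnitary : Matrix (Fin d) (Fin d) ℂ)
    with hUdef
  have hU : U ∈ Matrix.unitaryGroup (Fin d) ℂ := (hC.eigenvectorUnitary).2
  have hspec : C = U * Matrix.diagonal (RCLike.ofReal ∘ hC.eigenvalues) * star U :=
    hC.spectral_theorem
  conv_lhs => rw [hspec]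
  rw [trace_conj_diag]
  set B := star U * A * U with hBdef
  have hB : ‖B‖ ≤ ‖A‖ := conj_norm_le hU A
  calc ‖∑ i, B i i * (RCLike.ofReal ∘ hC.eigenvalues) i‖
      ≤ ∑ i, ‖B i i * (RCLike.ofReal ∘ hC.eigenvalues) i‖ :=
        norm_sum_le _ _
    _ ≤ ∑ i, ‖A‖ * |hC.eigenvalues i| := by
        apply Finset.sum_le_sum
        intro i _
        rw [norm_mul]
        have h1 : ‖B i i‖ ≤ ‖A‖ := (entry_le B i i).trans hB
        have h2 : ‖((RCLike.ofReal ∘ hC.eigenvalues) i : ℂ)‖ = |hC.eigenvalues i| := by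
          simp
        rw [h2]
        exact mul_le_mul_of_nonneg_right h1 (abs_nonneg _)
    _ = ‖A‖ * traceNormOfHermitian hC := by
        rw [traceNormOfHermitian, Finset.mul_sum]

lemma exists_sign {C : Matrix (Fin d) (Fin d) ℂ} (hC : C.IsHermitian) :
    ∃ P : Matrix (Fin d) (Fin d) ℂ, P.IsHermitian ∧ ‖P‖ ≤ 1 ∧
      (C * P).trace = ((traceNormOfHermitian hC : ℝ) : ℂ) := by
  classical
  set U : Matrix (Fin d) (Fin d) ℂ := (hC.eigenvectorUnitary : Matrix (Fin d) (Fin d) ℂ)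
    with hUdef
  have hU : U ∈ Matrix.unitaryGroup (Fin d) ℂ := (hC.eigenvectorUnitary).2
  have hUU : star U * U = 1 := (Matrix.mem_unitaryGroup_iff').mp hU
  have hspec : C = U * Matrix.diagonal (RCLike.ofReal ∘ hC.eigenvalues) * star U :=
    hC.spectral_theorem
  set s : Fin d → ℝ := fun i => if hC.eigenvalues i < 0 then (-1 : ℝ) else 1 with hsdef
  refine ⟨U * Matrix.diagonal (fun i => (s i : ℂ)) * star U, ?_, ?_, ?_⟩
  · -- Hermitian
    have hD : (Matrix.diagonal fun i => ((s i : ℝ) : ℂ))ᴴ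
        = Matrix.diagonal fun i => ((s i : ℝ) : ℂ) := by
      ext i j
      simp only [Matrix.conjTranspose_apply, Matrix.diagonal_apply]
      by_cases h : i = j
      · subst h; simp [Complex.conj_ofReal]
      · rw [if_neg (Ne.symm h), if_neg h, star_zero]
    show (U * Matrix.diagonal (fun i => ((s i : ℝ) : ℂ)) * star U)ᴴ = _
    simp only [Matrix.conjTranspose_mul, Matrix.star_eq_conjTranspose,
      Matrix.conjTranspose_conjTranspose, hD]
    noncomm_ring
  · -- norm
    have h := conj_norm_le (Unitary.star_mem hU) (Matrix.diagonal (fun i => ((s i : ℝ) : ℂ)))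
    rw [star_star] at h
    refine le_trans ?_ (h.trans (diag_norm_le _ fun i => ?_))
    · exact le_rfl
    · rw [hsdef]
      by_cases hh : hC.eigenvalues i < 0 <;> simp [hh]
  · -- trace
    conv_lhs => rw [hspec]
    have e : (U * Matrix.diagonal (RCLike.ofReal ∘ hC.eigenvalues) * star U) *
        (U * Matrix.diagonal (fun i => (s i : ℂ)) * star U)
        = U * (Matrix.diagonal (RCLike.ofReal ∘ hC.eigenvalues)
            * Matrix.diagonal (fun i => (s i : ℂ))) * star U := by
      rw [show (U * Matrix.diagonal (RCLike.ofReal ∘ hC.eigenvalues) * star U) *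
        (U * Matrix.diagonal (fun i => (s i : ℂ)) * star U)
        = U * (Matrix.diagonal (RCLike.ofReal ∘ hC.eigenvalues) * ((star U * U)
            * Matrix.diagonal (fun i => (s i : ℂ)))) * star U by noncomm_ring, hUU]
      noncomm_ring
    rw [e, Matrix.diagonal_mul_diagonal]
    rw [Matrix.trace_mul_cycle]
    rw [hUU, one_mul]
    rw [Matrix.trace_diagonal]
    rw [traceNormOfHermitian]
    push_cast
    apply Finset.sum_congr rfl
    intro i _
    have : (hC.eigenvalues i : ℂ) * (s i : ℂ) = ((|hC.eigenvalues i| : ℝ) : ℂ) := by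
      rw [hsdef]
      by_cases h : hC.eigenvalues i < 0
      · simp [h, abs_of_neg h]
      · simp [h, abs_of_nonneg (not_lt.mp h)]
    simpa using this

/-- The standard basis matrices. -/
noncomputable abbrev stdE (l k : Fin d) : Matrix (Fin d) (Fin d) ℂ :=
  Matrix.single l k (1:ℂ)

lemma smul_decomp (z : ℂ) (Y : Matrix (Fin d) (Fin d) ℂ) :
    z • Y = z.re • Y + z.im • (Complex.I • Y) := by
  conv_lhs => rw [← Complex.re_add_im z]
  rw [add_smul, mul_smul, Complex.coe_smul, Complex.coe_smul]

lemma matrix_decomp (X : Matrix (Fin d) (Fin d) ℂ) :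
    X = ∑ k : Fin d, ∑ l : Fin d,
      ((X l k).re • stdE l k + (X l k).im • (Complex.I • stdE l k)) := by
  conv_lhs => rw [matrix_eq_sum_single X]
  rw [Finset.sum_comm]
  apply Finset.sum_congr rfl
  intro k _
  apply Finset.sum_congr rfl
  intro l _
  rw [← smul_decomp]
  rw [smul_single, smul_eq_mul, mul_one]

lemma exists_rep (G : Matrix (Fin d) (Fin d) ℂ →ₗ[ℝ] ℝ) :
    ∃ C : Matrix (Fin d) (Fin d) ℂ, C.IsHermitian ∧
      ∀ A : Matrix (Fin d) (Fin d) ℂ, A.IsHermitian → (C * A).trace = ((G A : ℝ) : ℂ) := by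
  classical
  set C₀ : Matrix (Fin d) (Fin d) ℂ := Matrix.of fun k l =>
    ((G (stdE l k) : ℝ) : ℂ) - Complex.I * ((G (Complex.I • stdE l k) : ℝ) : ℂ) with hC₀
  have key : ∀ X : Matrix (Fin d) (Fin d) ℂ, ((C₀ * X).trace).re = G X := by
    intro X
    have htr : (C₀ * X).trace = ∑ k, ∑ l, C₀ k l * X l k := by
      simp [Matrix.trace, Matrix.diag, Matrix.mul_apply]
    rw [htr, Complex.re_sum]
    have hterm : ∀ k l : Fin d, (C₀ k l * X l k).re
        = (X l k).re * G (stdE l k) + (X l k).im * G (Complex.I • stdE l k) := by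
      intro k l
      rw [hC₀]
      simp [Complex.mul_re, Complex.sub_re, Complex.sub_im, Complex.mul_im]
      ring
    calc ∑ k, (∑ l, C₀ k l * X l k).re
        = ∑ k, ∑ l, (C₀ k l * X l k).re := by
          apply Finset.sum_congr rfl
          intro k _
          rw [Complex.re_sum]
      _ = ∑ k, ∑ l, ((X l k).re * G (stdE l k)
            + (X l k).im * G (Complex.I • stdE l k)) := by
          apply Finset.sum_congr rfl; intro k _
          apply Finset.sum_congr rfl; intro l _
          exact hterm k l
      _ = G X := by
          conv_rhs => rw [matrix_decomp X]
          rw [map_sum]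
          apply Finset.sum_congr rfl; intro k _
          rw [map_sum]
          apply Finset.sum_congr rfl; intro l _
          rw [map_add, G.map_smul, G.map_smul, smul_eq_mul, smul_eq_mul]
  refine ⟨(2⁻¹ : ℂ) • (C₀ + C₀ᴴ), ?_, ?_⟩
  · show ((2⁻¹ : ℂ) • (C₀ + C₀ᴴ))ᴴ = _
    rw [Matrix.conjTranspose_smul, Matrix.conjTranspose_add,
      Matrix.conjTranspose_conjTranspose]
    have : star (2⁻¹ : ℂ) = (2⁻¹ : ℂ) := by
      simp [Complex.star_def]
    rw [this, add_comm]
  · intro A hA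
    have hconj : (C₀ᴴ * A).trace = star ((C₀ * A).trace) := by
      calc (C₀ᴴ * A).trace = ((A * C₀)ᴴ).trace := by
            rw [Matrix.conjTranspose_mul, hA.eq]
        _ = star ((A * C₀).trace) := Matrix.trace_conjTranspose _
        _ = star ((C₀ * A).trace) := by rw [Matrix.trace_mul_comm]
    rw [Matrix.smul_mul, Matrix.add_mul, Matrix.trace_smul, Matrix.trace_add, hconj]
    have hre : (C₀ * A).trace + star ((C₀ * A).trace) = 2 * (((C₀ * A).trace).re : ℂ) := by
      rw [Complex.star_def, Complex.add_conj]
      push_cast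
      ring
    rw [hre, key A]
    rw [smul_eq_mul]
    ring

end SDPDualityAux

open SDPDualityAux in
/-- SDP duality: for Hermitian `H` and a real-linear subspace `𝒮` of Hermitian matrices,
`max { |Tr(H C̃)| : C̃ Hermitian, ‖C̃‖₁ ≤ 2, Tr(C̃ S) = 0 ∀ S ∈ 𝒮 } = 2 · min_{S ∈ 𝒮} ‖H − S‖`,
both optima being attained. -/
theorem traceNorm_ball_duality {d : ℕ} (H : Matrix (Fin d) (Fin d) ℂ)
    (hH : H.IsHermitian) (𝒮 : Submodule ℝ (Matrix (Fin d) (Fin d) ℂ))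
    (h𝒮 : ∀ S ∈ 𝒮, S.IsHermitian) :
    ∃ m : ℝ,
      IsLeast {y : ℝ | ∃ S ∈ 𝒮, y = opNorm (H - S)} m ∧
      IsGreatest {x : ℝ | ∃ C : Matrix (Fin d) (Fin d) ℂ, ∃ hC : C.IsHermitian,
          traceNormOfHermitian hC ≤ 2 ∧ (∀ S ∈ 𝒮, (C * S).trace = 0) ∧
          x = ‖(H * C).trace‖} (2 * m) := by
  classical
  haveI : FiniteDimensional ℝ (Matrix (Fin d) (Fin d) ℂ) := Module.Finite.trans ℂ _
  have hclosed : IsClosed (𝒮 : Set (Matrix (Fin d) (Fin d) ℂ)) :=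
    Submodule.closed_of_finiteDimensional 𝒮
  haveI : IsClosed (𝒮 : Set (Matrix (Fin d) (Fin d) ℂ)) := hclosed
  have hne : (𝒮 : Set (Matrix (Fin d) (Fin d) ℂ)).Nonempty := ⟨0, 𝒮.zero_mem⟩
  set m : ℝ := Metric.infDist H (𝒮 : Set (Matrix (Fin d) (Fin d) ℂ)) with hm
  have hm0 : 0 ≤ m := Metric.infDist_nonneg
  obtain ⟨S₀, hS₀mem, hS₀⟩ := hclosed.exists_infDist_eq_dist hne H
  have hS₀norm : ‖H - S₀‖ = m := by rw [hm, hS₀, dist_eq_norm]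
  refine ⟨m, ⟨⟨S₀, hS₀mem, by rw [opNorm_eq_norm, hS₀norm]⟩, ?_⟩, ?_, ?_⟩
  · -- lower bound for IsLeast
    rintro y ⟨S, hS, rfl⟩
    rw [opNorm_eq_norm, ← dist_eq_norm]
    exact Metric.infDist_le_dist_of_mem hS
  · -- membership for IsGreatest
    have hmq : ‖(Submodule.Quotient.mk H : _ ⧸ 𝒮)‖ = m := by
      apply le_antisymm
      · rw [hm, Metric.infDist_eq_iInf]
        haveI : Nonempty ↥(𝒮 : Set (Matrix (Fin d) (Fin d) ℂ)) := hne.to_subtype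
        refine le_ciInf fun Sx => ?_
        obtain ⟨S, hS⟩ := Sx
        have h1 : (Submodule.Quotient.mk H : _ ⧸ 𝒮) = Submodule.Quotient.mk (H - S) := by
          rw [Submodule.Quotient.mk_sub, (Submodule.Quotient.mk_eq_zero 𝒮).mpr hS, sub_zero]
        rw [h1, dist_eq_norm]
        exact Submodule.Quotient.norm_mk_le 𝒮 (H - S)
      · refine le_of_forall_pos_le_add fun ε hε => ?_
        obtain ⟨a, ha1, ha2⟩ :=
          Submodule.Quotient.norm_mk_lt (Submodule.Quotient.mk H : _ ⧸ 𝒮) hε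
        have hmem : H - a ∈ 𝒮 := by
          have := (Submodule.Quotient.eq 𝒮).mp ha1
          simpa using 𝒮.neg_mem this
        have : m ≤ ‖a‖ := by
          have h2 : dist H (H - a) = ‖a‖ := by
            rw [dist_eq_norm]
            simp
          rw [hm, ← h2]
          exact Metric.infDist_le_dist_of_mem hmem
        linarith
    obtain ⟨g, hg1, hg2⟩ := exists_dual_vector'' ℝ (Submodule.Quotient.mk H : _ ⧸ 𝒮)
    set L : Matrix (Fin d) (Fin d) ℂ →ₗ[ℝ] ℝ :=
      (2:ℝ) • ((g : _ ⧸ 𝒮 →ₗ[ℝ] ℝ).comp 𝒮.mkQ) with hL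
    have hLapp : ∀ X, L X = 2 * g (Submodule.Quotient.mk X) := by
      intro X
      simp [hL, Submodule.mkQ_apply]
    have hLbound : ∀ X : Matrix (Fin d) (Fin d) ℂ, |L X| ≤ 2 * ‖X‖ := by
      intro X
      rw [hLapp, abs_mul, abs_two]
      have h1 : |g (Submodule.Quotient.mk X)| ≤ ‖X‖ := by
        have h2 := g.le_opNorm (Submodule.Quotient.mk X)
        have h3 : ‖g‖ * ‖(Submodule.Quotient.mk X : _ ⧸ 𝒮)‖ ≤ ‖X‖ :=
          le_trans (mul_le_mul_of_nonneg_right hg1 (norm_nonneg _))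
            (by rw [one_mul]; exact Submodule.Quotient.norm_mk_le 𝒮 X)
        calc |g (Submodule.Quotient.mk X)| = ‖g (Submodule.Quotient.mk X)‖ :=
              (Real.norm_eq_abs _).symm
          _ ≤ ‖g‖ * ‖(Submodule.Quotient.mk X : _ ⧸ 𝒮)‖ := h2
          _ ≤ ‖X‖ := h3
      linarith [abs_nonneg (g (Submodule.Quotient.mk X))]
    have hLS : ∀ S ∈ 𝒮, L S = 0 := by
      intro S hS
      rw [hLapp, (Submodule.Quotient.mk_eq_zero 𝒮).mpr hS, map_zero, mul_zero]
    have hLH : L H = 2 * m := by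
      rw [hLapp, hg2, hmq]
      norm_num [RCLike.ofReal_real_eq_id]
    obtain ⟨C, hC, hCtr⟩ := exists_rep L
    refine ⟨C, hC, ?_, ?_, ?_⟩
    · -- trace norm bound
      obtain ⟨P, hP, hPnorm, hPtr⟩ := exists_sign hC
      have h1 : ((traceNormOfHermitian hC : ℝ) : ℂ) = ((L P : ℝ) : ℂ) := by
        rw [← hPtr, hCtr P hP]
      have h2 : traceNormOfHermitian hC = L P := by exact_mod_cast h1
      have h3 : L P ≤ 2 := by
        have := hLbound P
        have h4 : 2 * ‖P‖ ≤ 2 := by linarith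
        calc L P ≤ |L P| := le_abs_self _
          _ ≤ 2 * ‖P‖ := hLbound P
          _ ≤ 2 := h4
      linarith [h2]
    · -- orthogonality constraints
      intro S hS
      rw [hCtr S (h𝒮 S hS), hLS S hS]
      simp
    · -- value
      rw [Matrix.trace_mul_comm, hCtr H hH, hLH]
      rw [Complex.norm_real, Real.norm_eq_abs]
      rw [abs_of_nonneg (by linarith)]
  · -- upper bound for IsGreatest
    rintro x ⟨C, hC, hCn, hCorth, rfl⟩
    have h0 : (S₀ * C).trace = 0 := by
      rw [Matrix.trace_mul_comm]
      exact hCorth S₀ hS₀mem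
    have h1 : (H * C).trace = ((H - S₀) * C).trace := by
      rw [Matrix.sub_mul, Matrix.trace_sub, h0, sub_zero]
    rw [h1]
    calc ‖((H - S₀) * C).trace‖ ≤ ‖H - S₀‖ * traceNormOfHermitian hC :=
          holder (H - S₀) hC
      _ = m * traceNormOfHermitian hC := by rw [hS₀norm]
      _ ≤ m * 2 := mul_le_mul_of_nonneg_left hCn hm0
      _ = 2 * m := mul_comm _ _
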